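/- Lemma (persisted dequeue forces recovered Head past its index): if a dequeue read value i in Head and is persisted — meaning either a value > i of Head was written back, or some cell of Q stores (and NVM holds) an index ≥ i + R — then the recovered value of Head computed by PCRQ's recovery function is strictly greater than i. -/

import Mathlib

/-- a persisted dequeue forces the recovered Head past its index:
if a dequeue read `i` in Head and is persisted — either some value `> i` of Head
was written back, or some cell of Q holds a persisted index `≥ i + R` — then the
recovered value of Head computed by PCRQ's recovery is strictly greater than `i`. -/
theorem pcrq_recovered_head_past_persisted_dequeue {Item : Type} (R i t : ℕ)
    (persistedHead : ℕ) (q : Fin R → Bool × ℕ × Option Item)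
    (ht : ∀ j : Fin R, ¬ (q j).2.2.isSome → R ≤ (q j).2.1 → (q j).2.1 - R + 1 ≤ t)
    (head₁ : ℕ)
    (hhead₁ : head₁ = max persistedHead
      ((Finset.univ.filter fun j : Fin R => ¬ (q j).2.2.isSome ∧
          persistedHead ≤ (q j).2.1 - R ∧ (q j).2.1 - R < t).sup
        fun j => (q j).2.1 - R + 1))
    (hpers : persistedHead > i ∨
      ∃ j : Fin R, (q j).2.2 = none ∧ i + R ≤ (q j).2.1) :
    head₁ > i := by
  subst hhead₁
  rcases hpers with h | ⟨j, hnone, hidx⟩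
  · exact lt_of_lt_of_le h (le_max_left _ _)
  · have hns : ¬ (q j).2.2.isSome := by simp [hnone]
    have hR : R ≤ (q j).2.1 := le_trans (Nat.le_add_left _ _) hidx
    have hi : i ≤ (q j).2.1 - R := Nat.le_sub_of_add_le hidx
    have hlt : (q j).2.1 - R < t := by
      have := ht j hns hR; omega
    by_cases hp : persistedHead ≤ (q j).2.1 - R
    · have hmem : j ∈ Finset.univ.filter fun j : Fin R => ¬ (q j).2.2.isSome ∧
          persistedHead ≤ (q j).2.1 - R ∧ (q j).2.1 - R < t := by
        simp [hns, hp, hlt, hnone]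
      exact lt_of_lt_of_le (by omega : i < (q j).2.1 - R + 1)
        (le_trans (Finset.le_sup (f := fun j => (q j).2.1 - R + 1) hmem) (le_max_right _ _))
    · exact lt_of_lt_of_le (by omega : i < persistedHead) (le_max_left _ _)
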